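/- Let Γ and Γ_0 be regular cones in ℝⁿ such that the closure of Γ_0 is contained in Γ ∪ {0}. Then ∫_{Γ*} e^{−4π y·t} dt → 0 as |y| → ∞ with y in the closure of Γ_0: for every ε > 0 there is R > 0 such that for all y in the closure of Γ_0 with |y| > R, ∫_{Γ*} e^{−4π y·t} dt ≤ ε. -/

import Mathlib

open MeasureTheory

/-- The dual cone `Γ* = {t : x·t ≥ 0 for all x ∈ Γ}` of a set `Γ ⊆ ℝⁿ`. -/
def dualCone {n : ℕ} (Γ : Set (EuclideanSpace ℝ (Fin n))) : Set (EuclideanSpace ℝ (Fin n)) :=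
  {t | ∀ x ∈ Γ, 0 ≤ ∑ j, x j * t j}

/-- A regular cone in `ℝⁿ`: a nonempty open set not containing `0`, closed under positive
linear combinations, whose dual cone has nonempty interior. -/
def IsRegularCone {n : ℕ} (Γ : Set (EuclideanSpace ℝ (Fin n))) : Prop :=
  IsOpen Γ ∧ Γ.Nonempty ∧ (0 : EuclideanSpace ℝ (Fin n)) ∉ Γ ∧
    (∀ x ∈ Γ, ∀ y ∈ Γ, ∀ a b : ℝ, 0 < a → 0 < b → a • x + b • y ∈ Γ) ∧
    (interior (dualCone Γ)).Nonempty

open Filter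

private lemma szego_sum_mul_eq_inner {n : ℕ} (x t : EuclideanSpace ℝ (Fin n)) :
    ∑ j, x j * t j = (inner ℝ x t : ℝ) := by
  simp [PiLp.inner_apply, RCLike.inner_apply, conj_trivial, mul_comm]

/-- If `Γ₀`, `Γ` are regular cones in `ℝⁿ` with `closure Γ₀ ⊆ Γ ∪ {0}`, then the diagonal of
the Cauchy–Szegő kernel `∫_{Γ*} e^{−4π y·t} dt` tends to `0` as `|y| → ∞` with
`y ∈ closure Γ₀`. -/
theorem szego_diagonal_vanishes_at_infinity
    {n : ℕ} (Γ Γ₀ : Set (EuclideanSpace ℝ (Fin n)))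
    (hΓ : IsRegularCone Γ) (hΓ₀ : IsRegularCone Γ₀)
    (hsub : closure Γ₀ ⊆ Γ ∪ {0}) :
    ∀ ε : ℝ, 0 < ε → ∃ R > (0 : ℝ), ∀ y ∈ closure Γ₀, R < ‖y‖ →
      (∫ t in dualCone Γ, Real.exp (-(4 * Real.pi * ∑ j, y j * t j))) ≤ ε := by
  classical
  obtain ⟨hΓo, ⟨x₀, hx₀⟩, hΓ0, hΓc, -⟩ := hΓ
  obtain ⟨hΓ₀o, hΓ₀ne, hΓ₀0, hΓ₀c, -⟩ := hΓ₀
  have hn : 0 < n := by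
    rcases Nat.eq_zero_or_pos n with h | h
    · subst h
      have : x₀ = 0 := (WithLp.ext_iff _).2 (funext fun i => i.elim0)
      rw [this] at hx₀
      exact absurd hx₀ hΓ0
    · exact h
  haveI : Nonempty (Fin n) := ⟨⟨0, hn⟩⟩
  haveI : NullSingletonClass (volume : Measure (EuclideanSpace ℝ (Fin n))) := inferInstance
  set D := dualCone Γ with hDdef
  have hDclosed : IsClosed D := by
    have hrw : D = ⋂ x ∈ Γ, {t : EuclideanSpace ℝ (Fin n) | 0 ≤ ∑ j, x j * t j} := by
      ext t
      simp [hDdef, dualCone]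
    rw [hrw]
    refine isClosed_biInter fun x _ => isClosed_le continuous_const ?_
    exact continuous_finset_sum _ fun j _ =>
      continuous_const.mul (EuclideanSpace.proj j).continuous
  have hDmeas : MeasurableSet D := hDclosed.measurableSet
  have hDsmul : ∀ t ∈ D, ∀ a : ℝ, 0 ≤ a → a • t ∈ D := by
    intro t ht a ha x hx
    have h1 := ht x hx
    have h2 : ∑ j, x j * (a • t) j = a * ∑ j, x j * t j := by
      rw [Finset.mul_sum]
      refine Finset.sum_congr rfl fun j _ => ?_
      simp only [PiLp.smul_apply, smul_eq_mul]
      ring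
    rw [h2]
    exact mul_nonneg ha h1
  have hΓ₀smul : ∀ a : ℝ, 0 < a → ∀ y ∈ closure Γ₀, a • y ∈ closure Γ₀ := by
    intro a ha y hy
    refine map_mem_closure (continuous_const_smul a) hy ?_
    intro x hx
    have := hΓ₀c x hx x hx (a / 2) (a / 2) (by linarith) (by linarith)
    rwa [← add_smul, add_halves] at this
  set S₀ := closure Γ₀ ∩ Metric.sphere 0 1 with hS₀def
  set S₁ := D ∩ Metric.sphere 0 1 with hS₁def
  have hS₀c : IsCompact S₀ := (isCompact_sphere 0 1).inter_left isClosed_closure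
  have hS₁c : IsCompact S₁ := (isCompact_sphere 0 1).inter_left hDclosed
  have hpos : ∀ y ∈ S₀, ∀ t ∈ S₁, 0 < (inner ℝ y t : ℝ) := by
    rintro y ⟨hy, hy1⟩ t ⟨ht, ht1⟩
    rw [mem_sphere_zero_iff_norm] at hy1 ht1
    have hyΓ : y ∈ Γ := by
      rcases hsub hy with h | h
      · exact h
      · exfalso
        simp only [Set.mem_singleton_iff] at h
        rw [h, norm_zero] at hy1
        norm_num at hy1
    have h0 : 0 ≤ (inner ℝ y t : ℝ) := by
      have := ht y hyΓ
      rwa [szego_sum_mul_eq_inner] at this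
    rcases h0.lt_or_eq with h | h
    · exact h
    · exfalso
      obtain ⟨δ, hδ, hball⟩ := Metric.isOpen_iff.1 hΓo y hyΓ
      have hmem : y - (δ / 2) • t ∈ Γ := by
        apply hball
        rw [Metric.mem_ball, dist_eq_norm]
        have : y - (δ / 2) • t - y = -((δ / 2) • t) := by abel
        rw [this, norm_neg, norm_smul, ht1, Real.norm_eq_abs, abs_of_pos (by linarith)]
        linarith
      have h3 := ht _ hmem
      rw [szego_sum_mul_eq_inner, inner_sub_left, real_inner_smul_left,
        real_inner_self_eq_norm_sq, ht1, ← h] at h3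
      norm_num at h3
      linarith
  obtain ⟨c, hcpos, hc⟩ : ∃ c : ℝ, 0 < c ∧ ∀ y ∈ S₀, ∀ t ∈ S₁, c ≤ (inner ℝ y t : ℝ) := by
    rcases (S₀ ×ˢ S₁).eq_empty_or_nonempty with h | h
    · exact ⟨1, one_pos, fun y hy t ht =>
        absurd (Set.mk_mem_prod hy ht) (h ▸ Set.notMem_empty _)⟩
    · obtain ⟨p, hp, hmin⟩ := (hS₀c.prod hS₁c).exists_isMinOn h
        ((continuous_fst.inner continuous_snd).continuousOn :
          ContinuousOn (fun p : EuclideanSpace ℝ (Fin n) × EuclideanSpace ℝ (Fin n) =>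
            (inner ℝ p.1 p.2 : ℝ)) _)
      exact ⟨inner ℝ p.1 p.2, hpos _ hp.1 _ hp.2,
        fun y hy t ht => hmin (Set.mk_mem_prod hy ht)⟩
  have hscale : ∀ y ∈ closure Γ₀, ∀ t ∈ D, c * (‖y‖ * ‖t‖) ≤ (inner ℝ y t : ℝ) := by
    intro y hy t ht
    rcases eq_or_ne y 0 with rfl | hy0
    · simp
    rcases eq_or_ne t 0 with rfl | ht0
    · simp
    have hyn : 0 < ‖y‖ := norm_pos_iff.2 hy0
    have htn : 0 < ‖t‖ := norm_pos_iff.2 ht0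
    have h1 : (‖y‖⁻¹ • y) ∈ S₀ :=
      ⟨hΓ₀smul _ (inv_pos.2 hyn) y hy, by
        rw [mem_sphere_zero_iff_norm, norm_smul, norm_inv, norm_norm,
          inv_mul_cancel₀ hyn.ne']⟩
    have h2 : (‖t‖⁻¹ • t) ∈ S₁ :=
      ⟨hDsmul t ht _ (inv_nonneg.2 htn.le), by
        rw [mem_sphere_zero_iff_norm, norm_smul, norm_inv, norm_norm,
          inv_mul_cancel₀ htn.ne']⟩
    have h3 := hc _ h1 _ h2
    rw [real_inner_smul_left, real_inner_smul_right] at h3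
    have h4 := mul_le_mul_of_nonneg_left h3 (mul_pos hyn htn).le
    calc c * (‖y‖ * ‖t‖) = ‖y‖ * ‖t‖ * c := by ring
      _ ≤ ‖y‖ * ‖t‖ * (‖y‖⁻¹ * (‖t‖⁻¹ * (inner ℝ y t : ℝ))) := h4
      _ = (inner ℝ y t : ℝ) := by field_simp
  have hBint : Integrable
      (fun t : EuclideanSpace ℝ (Fin n) => (1 + ‖t‖) ^ (-((n : ℝ) + 1))) := by
    apply integrable_one_add_norm
    rw [finrank_euclideanSpace_fin]
    linarith
  have hdom : ∀ a : ℝ, (n : ℝ) + 1 ≤ a → ∀ t : EuclideanSpace ℝ (Fin n),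
      Real.exp (-(a * ‖t‖)) ≤ (1 + ‖t‖) ^ (-((n : ℝ) + 1)) := by
    intro a ha t
    have h1 : Real.exp (-(a * ‖t‖)) ≤ Real.exp (-(((n : ℝ) + 1) * ‖t‖)) := by
      apply Real.exp_le_exp.2
      have := norm_nonneg t
      nlinarith
    refine h1.trans ?_
    have h2 : Real.exp (-(((n : ℝ) + 1) * ‖t‖)) = Real.exp ‖t‖ ^ (-((n : ℝ) + 1)) := by
      rw [Real.rpow_def_of_pos (Real.exp_pos _), Real.log_exp]
      ring_nf
    rw [h2]
    refine Real.rpow_le_rpow_of_nonpos (by positivity) ?_ ?_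
    · rw [add_comm]
      exact Real.add_one_le_exp _
    · have : (0 : ℝ) ≤ (n : ℝ) + 1 := by positivity
      linarith
  have hexpmeas : ∀ a : ℝ, AEStronglyMeasurable
      (fun t : EuclideanSpace ℝ (Fin n) => Real.exp (-(a * ‖t‖))) volume :=
    fun a => (Real.continuous_exp.comp
      (continuous_const.mul continuous_norm).neg).aestronglyMeasurable
  have hexpint : ∀ a : ℝ, (n : ℝ) + 1 ≤ a →
      Integrable (fun t : EuclideanSpace ℝ (Fin n) => Real.exp (-(a * ‖t‖))) := by
    intro a ha
    refine hBint.mono (hexpmeas a) (ae_of_all _ fun t => ?_)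
    rw [Real.norm_eq_abs, abs_of_pos (Real.exp_pos _)]
    exact (hdom a ha t).trans (le_abs_self _)
  have hJ : Tendsto
      (fun a : ℝ => ∫ t : EuclideanSpace ℝ (Fin n), Real.exp (-(a * ‖t‖)))
      atTop (nhds 0) := by
    have h0 : (0 : ℝ) = ∫ _t : EuclideanSpace ℝ (Fin n), (0 : ℝ) := by simp
    rw [h0]
    refine tendsto_integral_filter_of_dominated_convergence _
      (Eventually.of_forall fun a => hexpmeas a) ?_ hBint ?_
    · filter_upwards [eventually_ge_atTop ((n : ℝ) + 1)] with a ha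
      refine ae_of_all _ fun t => ?_
      rw [Real.norm_eq_abs, abs_of_pos (Real.exp_pos _)]
      exact hdom a ha t
    · filter_upwards [compl_mem_ae_iff.2
        (measure_singleton (0 : EuclideanSpace ℝ (Fin n)))] with t ht
      have htn : 0 < ‖t‖ := norm_pos_iff.2 (by simpa using ht)
      exact Real.tendsto_exp_atBot.comp
        (tendsto_neg_atTop_atBot.comp (tendsto_id.atTop_mul_const htn))
  intro ε hε
  have hev : ∀ᶠ a : ℝ in atTop,
      (∫ t : EuclideanSpace ℝ (Fin n), Real.exp (-(a * ‖t‖))) ≤ ε ∧ (n : ℝ) + 1 ≤ a :=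
    (hJ.eventually (eventually_le_nhds hε)).and (eventually_ge_atTop _)
  obtain ⟨a₀, ha₀⟩ := eventually_atTop.1 hev
  have hπc : 0 < 4 * Real.pi * c := by
    have := Real.pi_pos
    positivity
  refine ⟨max 1 (a₀ / (4 * Real.pi * c)),
    lt_of_lt_of_le zero_lt_one (le_max_left _ _), fun y hy hRy => ?_⟩
  set a : ℝ := 4 * Real.pi * c * ‖y‖ with hadef
  have hya : a₀ ≤ a := by
    have h1 : a₀ / (4 * Real.pi * c) ≤ ‖y‖ :=
      (le_max_right _ _).trans hRy.le
    rw [div_le_iff₀ hπc] at h1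
    rw [hadef]; linarith
  obtain ⟨hJa, hna⟩ := ha₀ a hya
  have hpt : ∀ t ∈ D,
      Real.exp (-(4 * Real.pi * ∑ j, y j * t j)) ≤ Real.exp (-(a * ‖t‖)) := by
    intro t ht
    rw [szego_sum_mul_eq_inner]
    apply Real.exp_le_exp.2
    have h1 := mul_le_mul_of_nonneg_left (hscale y hy t ht)
      (show (0 : ℝ) ≤ 4 * Real.pi by positivity)
    rw [hadef]
    nlinarith
  have hfint : IntegrableOn
      (fun t : EuclideanSpace ℝ (Fin n) =>
        Real.exp (-(4 * Real.pi * ∑ j, y j * t j))) D := by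
    refine Integrable.mono ((hexpint a hna).integrableOn) ?_ ?_
    · refine Continuous.aestronglyMeasurable ?_
      refine Real.continuous_exp.comp (Continuous.neg ?_)
      exact continuous_const.mul
        (continuous_finset_sum _ fun j _ =>
          continuous_const.mul (EuclideanSpace.proj j).continuous)
    · rw [ae_restrict_iff' hDmeas]
      refine ae_of_all _ fun t ht => ?_
      rw [Real.norm_eq_abs, abs_of_pos (Real.exp_pos _), Real.norm_eq_abs,
        abs_of_pos (Real.exp_pos _)]
      exact hpt t ht
  calc (∫ t in D, Real.exp (-(4 * Real.pi * ∑ j, y j * t j)))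
      ≤ ∫ t in D, Real.exp (-(a * ‖t‖)) :=
        setIntegral_mono_on hfint ((hexpint a hna).integrableOn) hDmeas hpt
    _ ≤ ∫ t : EuclideanSpace ℝ (Fin n), Real.exp (-(a * ‖t‖)) :=
        setIntegral_le_integral (hexpint a hna) (ae_of_all _ fun t => (Real.exp_pos _).le)
    _ ≤ ε := hJa
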